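/- Let g be a symmetric 4×4 complex matrix, g = gR + i·gI, satisfying the cross-reality condition gR a c · gI d b = gR a d · gI c b for all indices a, b, c, d. Then det g = det gR + det gI. -/
import Mathlib

lemma det4_rank_two {R : Type*} [CommRing R] (u v u' v' : Fin 4 → R) :
    (Matrix.of fun a b => u a * v b + u' a * v' b).det = 0 := by
  simp [Matrix.det_succ_row_zero, Fin.sum_univ_succ]
  ring

lemma det4_eq_zero_of_entries {R : Type*} [CommRing R] (M : Matrix (Fin 4) (Fin 4) R)
    (u v u' v' : Fin 4 → R) (h : ∀ a b, M a b = u a * v b + u' a * v' b) :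
    M.det = 0 := by
  have : M = Matrix.of fun a b => u a * v b + u' a * v' b := by
    ext a b; exact h a b
  rw [this]; exact det4_rank_two u v u' v'

/-- For a symmetric 4×4 complex matrix `g = gR + i·gI` satisfying
the cross-reality condition, `det g = det gR + det gI` (where `gR` and `gI`
are the entrywise real and imaginary parts, real matrices). -/
theorem det_eq_det_re_add_det_im_of_cross_reality
    (g : Matrix (Fin 4) (Fin 4) ℂ) (hsymm : g.IsSymm)
    (gR gI : Matrix (Fin 4) (Fin 4) ℝ)
    (hR : ∀ a b : Fin 4, gR a b = (g a b).re)
    (hI : ∀ a b : Fin 4, gI a b = (g a b).im)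
    (hcross : ∀ a b c d : Fin 4, gR a c * gI d b = gR a d * gI c b) :
    g.det = (gR.det : ℂ) + (gI.det : ℂ) := by
  by_cases hI0 : gI = 0
  · -- g is real
    have hg : g = gR.map (Complex.ofRealHom) := by
      ext a b
      apply Complex.ext
      · simp [hR a b]
      · have : gI a b = 0 := by rw [hI0]; rfl
        simp [← hI a b, this]
    rw [hg, show gR.map ⇑Complex.ofRealHom = Complex.ofRealHom.mapMatrix gR from rfl,
      ← RingHom.map_det, hI0]
    simp
  by_cases hR0 : gR = 0
  · -- g is purely imaginary
    have hg : g = Complex.I • (gI.map Complex.ofRealHom) := by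
      ext a b
      apply Complex.ext
      · have : gR a b = 0 := by rw [hR0]; rfl
        simp [← hR a b, this]
      · simp [hI a b]
    rw [hg, Matrix.det_smul,
      show gI.map ⇑Complex.ofRealHom = Complex.ofRealHom.mapMatrix gI from rfl,
      ← RingHom.map_det, hR0]
    norm_num
  · -- mixed case: both gR and gI are rank ≤ 1, all determinants vanish
    have hRex : ∃ a b, gR a b ≠ 0 := by
      by_contra h
      push_neg at h
      exact hR0 (by ext a b; simpa using h a b)
    have hIex : ∃ a b, gI a b ≠ 0 := by
      by_contra h
      push_neg at h
      exact hI0 (by ext a b; simpa using h a b)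
    obtain ⟨a0, b0, ha0⟩ := hRex
    obtain ⟨c0, d0, hc0⟩ := hIex
    -- gR a c = gR a c0 * (gI c d0 / gI c0 d0)
    have hgR : ∀ a c, gR a c = gR a c0 * (gI c d0 / gI c0 d0) := by
      intro a c
      have := hcross a d0 c c0
      field_simp
      linarith [this]
    -- gI d b = (gR a0 d / gR a0 b0) * gI b0 b
    have hgI : ∀ d b, gI d b = (gR a0 d / gR a0 b0) * gI b0 b := by
      intro d b
      have := hcross a0 b b0 d
      field_simp
      linarith [this]
    have hdetR : gR.det = 0 :=
      det4_eq_zero_of_entries gR (fun a => gR a c0) (fun c => gI c d0 / gI c0 d0)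
        (fun _ => 0) (fun _ => 0) (by intro a b; simpa using hgR a b)
    have hdetI : gI.det = 0 :=
      det4_eq_zero_of_entries gI (fun d => gR a0 d / gR a0 b0) (fun b => gI b0 b)
        (fun _ => 0) (fun _ => 0) (by intro a b; simpa using hgI a b)
    have hdetg : g.det = 0 := by
      apply det4_eq_zero_of_entries g (fun a => (gR a c0 : ℂ))
        (fun c => ((gI c d0 / gI c0 d0 : ℝ) : ℂ))
        (fun d => Complex.I * ((gR a0 d / gR a0 b0 : ℝ) : ℂ))
        (fun b => ((gI b0 b : ℝ) : ℂ))
      intro a b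
      have h1 : g a b = (gR a b : ℂ) + (gI a b : ℂ) * Complex.I := by
        rw [hR a b, hI a b]
        exact (Complex.re_add_im (g a b)).symm
      rw [h1, hgR a b, hgI a b]
      push_cast
      ring
    rw [hdetg, hdetR, hdetI]
    norm_num
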